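/- Let P_A, P_B, P be orthogonal projections on H with P_A P = P P_A = P and P_B P = P P_B = P, and suppose ‖φ‖² - ‖P_A P_B φ‖² ≤ 4(⟨φ,(1-P_A)φ⟩ + ⟨φ,(1-P_B)φ⟩) for all φ. Then with δ = ‖(P_A - P)(P_B - P)‖, for all φ it holds that (1-δ)/4 · ⟨φ, (1-P)φ⟩ ≤ ⟨φ, (1-P_A)φ⟩ + ⟨φ, (1-P_B)φ⟩. -/

import Mathlib

/-- Under frustration freeness and the converse-detectability inequality
`‖φ‖² - ‖P_A P_B φ‖² ≤ 4(⟨φ,(1-P_A)φ⟩ + ⟨φ,(1-P_B)φ⟩)`, with `δ = ‖(P_A-P)(P_B-P)‖`,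
one has `(1-δ)/4 ⟨φ,(1-P)φ⟩ ≤ ⟨φ,(1-P_A)φ⟩ + ⟨φ,(1-P_B)φ⟩` for all `φ`. -/
theorem stmt_4 {H : Type*} [NormedAddCommGroup H] [InnerProductSpace ℂ H] [CompleteSpace H]
    (PA PB P : H →L[ℂ] H)
    (hPA : IsSelfAdjoint PA) (hPAidem : PA * PA = PA)
    (hPB : IsSelfAdjoint PB) (hPBidem : PB * PB = PB)
    (hP : IsSelfAdjoint P) (hPidem : P * P = P)
    (hA1 : PA * P = P) (hA2 : P * PA = P) (hB1 : PB * P = P) (hB2 : P * PB = P)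
    (hconv : ∀ φ : H, ‖φ‖ ^ 2 - ‖(PA * PB) φ‖ ^ 2 ≤
      4 * ((1 - PA).reApplyInnerSelf φ + (1 - PB).reApplyInnerSelf φ))
    (δ : ℝ) (hδ : δ = ‖(PA - P) * (PB - P)‖) :
    ∀ φ : H, (1 - δ) / 4 * ((1 - P).reApplyInnerSelf φ) ≤
      (1 - PA).reApplyInnerSelf φ + (1 - PB).reApplyInnerSelf φ := by
  -- generic fact about selfadjoint idempotents
  have hre : ∀ (T : H →L[ℂ] H), IsSelfAdjoint T → T * T = T →
      ∀ x : H, T.reApplyInnerSelf x = ‖T x‖ ^ 2 := by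
    intro T hT hTT x
    have h2 : (inner ℂ (T x) x : ℂ) = inner ℂ (T x) (T x) := by
      conv_lhs => rw [← hTT, ContinuousLinearMap.mul_apply]
      exact hT.isSymmetric (T x) x
    rw [ContinuousLinearMap.reApplyInnerSelf, h2, inner_self_eq_norm_sq]
  have hQA : IsSelfAdjoint (1 - PA) := (IsSelfAdjoint.one _).sub hPA
  have hQB : IsSelfAdjoint (1 - PB) := (IsSelfAdjoint.one _).sub hPB
  have hQP : IsSelfAdjoint (1 - P) := (IsSelfAdjoint.one _).sub hP
  have hQAi : (1 - PA) * (1 - PA) = 1 - PA := by noncomm_ring [hPAidem]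
  have hQBi : (1 - PB) * (1 - PB) = 1 - PB := by noncomm_ring [hPBidem]
  have hQPi : (1 - P) * (1 - P) = 1 - P := by noncomm_ring [hPidem]
  intro φ
  set ψ := (1 - P) φ with hψ
  -- energies agree on φ and ψ
  have hAcomp : (1 - PA) * (1 - P) = 1 - PA := by noncomm_ring [hA1]
  have hBcomp : (1 - PB) * (1 - P) = 1 - PB := by noncomm_ring [hB1]
  have hAψ : (1 - PA) ψ = (1 - PA) φ := by
    rw [hψ, ← ContinuousLinearMap.mul_apply, hAcomp]
  have hBψ : (1 - PB) ψ = (1 - PB) φ := by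
    rw [hψ, ← ContinuousLinearMap.mul_apply, hBcomp]
  have hδ0 : 0 ≤ δ := hδ ▸ norm_nonneg _
  have hRHS0 : 0 ≤ (1 - PA).reApplyInnerSelf φ + (1 - PB).reApplyInnerSelf φ := by
    rw [hre _ hQA hQAi, hre _ hQB hQBi]; positivity
  rw [hre _ hQP hQPi φ]
  by_cases hδ1 : 1 ≤ δ
  · have : (1 - δ) / 4 * ‖(1 - P) φ‖ ^ 2 ≤ 0 := by
      apply mul_nonpos_of_nonpos_of_nonneg
      · linarith
      · positivity
    linarith
  push_neg at hδ1
  -- key algebra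
  have hkey : (PA - P) * (PB - P) = PA * PB - P := by noncomm_ring [hA1, hB2, hPidem]
  have hPψ : (PA * PB) ψ = ((PA - P) * (PB - P)) ψ := by
    rw [hkey]
    have : P ψ = 0 := by
      rw [hψ, ← ContinuousLinearMap.mul_apply]
      have : P * (1 - P) = 0 := by noncomm_ring [hPidem]
      rw [this]; rfl
    simp [ContinuousLinearMap.sub_apply, this]
  have hnormψ : ‖(PA * PB) ψ‖ ≤ δ * ‖ψ‖ := by
    rw [hPψ, hδ]
    exact ContinuousLinearMap.le_opNorm _ ψ
  have hsq : ‖(PA * PB) ψ‖ ^ 2 ≤ δ ^ 2 * ‖ψ‖ ^ 2 := by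
    have := mul_self_le_mul_self (norm_nonneg _) hnormψ
    nlinarith [norm_nonneg ((PA * PB) ψ), norm_nonneg ψ]
  have hc := hconv ψ
  rw [hre _ hQA hQAi ψ, hre _ hQB hQBi ψ, hAψ, hBψ] at hc
  rw [hre _ hQA hQAi φ, hre _ hQB hQBi φ] at hRHS0 ⊢
  nlinarith [norm_nonneg ψ, sq_nonneg ‖ψ‖]
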